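/- Fix a discretization as in the context and let ω : [0,π) × ℝ → ℝ be any function (a weight function). Then for every f ∈ L²(Ω) and every g ∈ L²(S), the convolutional Radon transform R_ω and the convolutional backprojection R_ω* satisfy the adjoint identity ∫_S (R_ω f)(φ,s) · g(φ,s) d(φ,s) = ∫_Ω f(x) · (R_ω* g)(x) dx. -/

import Mathlib

open MeasureTheory Real Set Filter

/-- The ray-driven weight function `w^rd(φ, t)` (for spatial resolution `δx`).
Here `κ(φ) = min{1/|cos φ|, 1/|sin φ|}` (with `1/0 = ∞`) is expressed as
`1 / max |cos φ| |sin φ|`, which is the same real number. -/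
noncomputable def rayWeight (δx φ t : ℝ) : ℝ :=
  (1 / δx) *
    (if δx / 2 * |(|Real.cos φ| - |Real.sin φ|)| ≤ |t| ∧
        |t| < δx / 2 * (|Real.cos φ| + |Real.sin φ|) then
      (δx / 2 * (|Real.cos φ| + |Real.sin φ|) - |t|) / (δx * |Real.cos φ * Real.sin φ|)
    else if |t| < δx / 2 * |(|Real.cos φ| - |Real.sin φ|)| then
      1 / max |Real.cos φ| |Real.sin φ|
    else if (φ = 0 ∨ φ = Real.pi / 2) ∧ |t| = δx / 2 * (|Real.cos φ| + |Real.sin φ|) then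
      1 / 2
    else 0)

/-- The pixel-driven weight function `w^pd(t)` (for detector resolution `δs`). -/
noncomputable def pixelWeight (δs t : ℝ) : ℝ := (1 / δs ^ 2) * max (δs - |t|) 0

/-- Spatial pixel center `x_ij` for an `Nx × Nx` grid on `[-1,1]²` (so `δ_x = 2/Nx`). -/
noncomputable def xc (Nx : ℕ) (i j : Fin Nx) : ℝ × ℝ :=
  (((i : ℝ) + 1 / 2) * (2 / (Nx : ℝ)) - 1, ((j : ℝ) + 1 / 2) * (2 / (Nx : ℝ)) - 1)

/-- Spatial pixel `X_ij = x_ij + [-δ_x/2, δ_x/2]²`. -/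
noncomputable def Xpix (Nx : ℕ) (i j : Fin Nx) : Set (ℝ × ℝ) :=
  {y | |y.1 - (xc Nx i j).1| ≤ (2 / (Nx : ℝ)) / 2 ∧ |y.2 - (xc Nx i j).2| ≤ (2 / (Nx : ℝ)) / 2}

/-- Detector pixel center `s_p = (p + 1/2) δ_s - 1` with `δ_s = 2/Ns`. -/
noncomputable def sc (Ns p : ℕ) : ℝ := ((p : ℝ) + 1 / 2) * (2 / (Ns : ℝ)) - 1

/-- Detector pixel `S_p = [s_p - δ_s/2, s_p + δ_s/2)`. -/
noncomputable def Spix (Ns : ℕ) (p : Fin Ns) : Set ℝ :=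
  Set.Ico (sc Ns p - (2 / (Ns : ℝ)) / 2) (sc Ns p + (2 / (Ns : ℝ)) / 2)

/-- The successor angle `φ_{q+1}`, with the convention `φ_{N_φ} = φ_0 + π`. -/
noncomputable def angNext {Nφ : ℕ} (ang : Fin Nφ → ℝ) (q : Fin Nφ) : ℝ :=
  if h : (q : ℕ) + 1 < Nφ then ang ⟨(q : ℕ) + 1, h⟩ else ang ⟨0, q.pos⟩ + Real.pi

/-- The predecessor angle `φ_{q-1}`, with the convention `φ_{-1} = φ_{N_φ-1} - π`. -/
noncomputable def angPrev {Nφ : ℕ} (ang : Fin Nφ → ℝ) (q : Fin Nφ) : ℝ :=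
  if (q : ℕ) = 0 then ang ⟨Nφ - 1, Nat.sub_lt q.pos Nat.one_pos⟩ - Real.pi
  else ang ⟨(q : ℕ) - 1, lt_of_le_of_lt (Nat.sub_le _ _) q.isLt⟩

/-- Left endpoint `(φ_{q-1} + φ_q)/2` of the angular pixel `Φ_q`. -/
noncomputable def phiLo {Nφ : ℕ} (ang : Fin Nφ → ℝ) (q : Fin Nφ) : ℝ :=
  (angPrev ang q + ang q) / 2

/-- Right endpoint `(φ_q + φ_{q+1})/2` of the angular pixel `Φ_q`. -/
noncomputable def phiHi {Nφ : ℕ} (ang : Fin Nφ → ℝ) (q : Fin Nφ) : ℝ :=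
  (ang q + angNext ang q) / 2

/-- The length `|Φ_q|` of the angular pixel `Φ_q`. -/
noncomputable def phiLen {Nφ : ℕ} (ang : Fin Nφ → ℝ) (q : Fin Nφ) : ℝ :=
  phiHi ang q - phiLo ang q

/-- The angular pixel `Φ_q = [(φ_{q-1}+φ_q)/2, (φ_q+φ_{q+1})/2)`, π-periodically
projected into `[0, π)`. -/
noncomputable def PhiSet {Nφ : ℕ} (ang : Fin Nφ → ℝ) (q : Fin Nφ) : Set ℝ :=
  {φ | φ ∈ Set.Ico 0 Real.pi ∧
    ∃ k : ℤ, φ + (k : ℝ) * Real.pi ∈ Set.Ico (phiLo ang q) (phiHi ang q)}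

/-- `x · θ_φ`, the projection of the point `x` onto the detector direction `θ_φ`. -/
noncomputable def proj (x : ℝ × ℝ) (φ : ℝ) : ℝ := x.1 * Real.cos φ + x.2 * Real.sin φ

/-- The spatial domain `Ω = B(0,1) ⊂ ℝ²`. -/
noncomputable def Omg : Set (ℝ × ℝ) := {x | x.1 ^ 2 + x.2 ^ 2 < 1}

/-- The sinogram domain `S = [0, π) × (-1, 1)`, with coordinates `(φ, s)`. -/
noncomputable def Sdom : Set (ℝ × ℝ) := Set.Ico 0 Real.pi ×ˢ Set.Ioo (-1 : ℝ) 1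

/-- The convolutional Radon transform `R_ω` with weight function `ω`. -/
noncomputable def convRadon (Nx Ns : ℕ) {Nφ : ℕ} (ang : Fin Nφ → ℝ)
    (ω : ℝ → ℝ → ℝ) (f : ℝ × ℝ → ℝ) (y : ℝ × ℝ) : ℝ :=
  ∑ q : Fin Nφ, ∑ p : Fin Ns,
    Set.indicator (PhiSet ang q ×ˢ Spix Ns p) (fun _ => (1 : ℝ)) y *
      ∑ i : Fin Nx, ∑ j : Fin Nx,
        ω (ang q) (proj (xc Nx i j) (ang q) - sc Ns (p : ℕ)) * ∫ x in Xpix Nx i j, f x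

/-- The convolutional backprojection `R_ω^*` with weight function `ω`. -/
noncomputable def convBack (Nx Ns : ℕ) {Nφ : ℕ} (ang : Fin Nφ → ℝ)
    (ω : ℝ → ℝ → ℝ) (g : ℝ × ℝ → ℝ) (x : ℝ × ℝ) : ℝ :=
  ∑ i : Fin Nx, ∑ j : Fin Nx,
    Set.indicator (Xpix Nx i j) (fun _ => (1 : ℝ)) x *
      ∑ q : Fin Nφ, ∑ p : Fin Ns,
        ω (ang q) (proj (xc Nx i j) (ang q) - sc Ns (p : ℕ)) *
          ∫ z in PhiSet ang q ×ˢ Spix Ns p, g z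

/-- The Radon transform `(Rf)(φ,s) = ∫ f(s θ_φ + t θ_φ^⊥) dt`, as a function of
`y = (φ, s)`. -/
noncomputable def radonT (f : ℝ × ℝ → ℝ) (y : ℝ × ℝ) : ℝ :=
  ∫ t : ℝ, f (y.2 * Real.cos y.1 - t * Real.sin y.1, y.2 * Real.sin y.1 + t * Real.cos y.1)

/-- The backprojection `(R^* g)(x) = ∫₀^π g(φ, x · θ_φ) dφ`. -/
noncomputable def radonAdj (g : ℝ × ℝ → ℝ) (x : ℝ × ℝ) : ℝ :=
  ∫ φ in (0 : ℝ)..Real.pi, g (φ, proj x φ)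

section Aux

open MeasureTheory Real Set Filter

lemma measurableSet_Omg : MeasurableSet Omg := by
  have : Omg = {x : ℝ × ℝ | x.1 ^ 2 + x.2 ^ 2 < 1} := rfl
  rw [this]
  exact measurableSet_lt (by fun_prop) measurable_const

lemma measurableSet_Sdom : MeasurableSet Sdom :=
  measurableSet_Ico.prod measurableSet_Ioo

lemma measurableSet_Xpix (Nx : ℕ) (i j : Fin Nx) : MeasurableSet (Xpix Nx i j) := by
  have : Xpix Nx i j =
      (Set.Icc ((xc Nx i j).1 - (2 / (Nx : ℝ)) / 2) ((xc Nx i j).1 + (2 / (Nx : ℝ)) / 2)) ×ˢ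
      (Set.Icc ((xc Nx i j).2 - (2 / (Nx : ℝ)) / 2) ((xc Nx i j).2 + (2 / (Nx : ℝ)) / 2)) := by
    ext y
    simp only [Xpix, Set.mem_setOf_eq, Set.mem_prod, Set.mem_Icc, abs_le]
    constructor
    · rintro ⟨⟨h1, h2⟩, h3, h4⟩; exact ⟨⟨by linarith, by linarith⟩, by linarith, by linarith⟩
    · rintro ⟨⟨h1, h2⟩, h3, h4⟩; exact ⟨⟨by linarith, by linarith⟩, by linarith, by linarith⟩
  rw [this]
  exact measurableSet_Icc.prod measurableSet_Icc

lemma measurableSet_PhiSet {Nφ : ℕ} (ang : Fin Nφ → ℝ) (q : Fin Nφ) :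
    MeasurableSet (PhiSet ang q) := by
  have : PhiSet ang q = Set.Ico 0 Real.pi ∩
      ⋃ k : ℤ, (fun φ : ℝ => φ + (k : ℝ) * Real.pi) ⁻¹'
        Set.Ico (phiLo ang q) (phiHi ang q) := by
    ext φ
    simp only [PhiSet, Set.mem_setOf_eq, Set.mem_inter_iff, Set.mem_iUnion, Set.mem_preimage]
  rw [this]
  exact measurableSet_Ico.inter
    (MeasurableSet.iUnion fun k => (measurable_add_const _) measurableSet_Ico)

lemma volume_Sdom_lt_top : volume Sdom < ⊤ := by
  have : Sdom = Set.Ico (0:ℝ) Real.pi ×ˢ Set.Ioo (-1:ℝ) 1 := rfl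
  rw [this, MeasureTheory.Measure.volume_eq_prod, Measure.prod_prod, Real.volume_Ico, Real.volume_Ioo]
  exact ENNReal.mul_lt_top ENNReal.ofReal_lt_top ENNReal.ofReal_lt_top

lemma volume_Omg_lt_top : volume Omg < ⊤ := by
  have hsub : Omg ⊆ Set.Ioo (-1:ℝ) 1 ×ˢ Set.Ioo (-1:ℝ) 1 := by
    rintro ⟨x1, x2⟩ hx
    have h : x1 ^ 2 + x2 ^ 2 < 1 := hx
    have h1 : |x1| < 1 := by nlinarith [sq_nonneg x1, sq_nonneg x2, abs_nonneg x1, sq_abs x1]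
    have h2 : |x2| < 1 := by nlinarith [sq_nonneg x1, sq_nonneg x2, abs_nonneg x2, sq_abs x2]
    rw [abs_lt] at h1 h2
    exact ⟨⟨h1.1, h1.2⟩, ⟨h2.1, h2.2⟩⟩
  refine lt_of_le_of_lt (measure_mono hsub) ?_
  rw [MeasureTheory.Measure.volume_eq_prod, Measure.prod_prod, Real.volume_Ioo]
  exact ENNReal.mul_lt_top ENNReal.ofReal_lt_top ENNReal.ofReal_lt_top

lemma indicator_mul_eq (A : Set (ℝ × ℝ)) (c : ℝ) (h : ℝ × ℝ → ℝ) :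
    (fun y => Set.indicator A (fun _ => (1:ℝ)) y * c * h y)
      = A.indicator (fun y => c * h y) := by
  funext y
  by_cases hy : y ∈ A <;>
    simp [Set.indicator_of_mem, Set.indicator_of_notMem, hy]

lemma core_integral (S A : Set (ℝ × ℝ)) (hS : MeasurableSet S) (hA : MeasurableSet A)
    (h : ℝ × ℝ → ℝ) (h0 : ∀ y ∉ S, h y = 0) (c : ℝ) :
    ∫ y in S, Set.indicator A (fun _ => (1:ℝ)) y * c * h y = c * ∫ y in A, h y := by
  rw [indicator_mul_eq, MeasureTheory.integral_indicator hA,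
    Measure.restrict_restrict hA, MeasureTheory.integral_const_mul]
  congr 1
  have e2 : h = S.indicator h := by
    funext y; by_cases hy : y ∈ S <;> simp [hy, h0]
  conv_rhs => rw [e2]
  rw [MeasureTheory.integral_indicator hS, Measure.restrict_restrict hS, Set.inter_comm]

lemma core_integrable (S A : Set (ℝ × ℝ)) (hA : MeasurableSet A)
    (h : ℝ × ℝ → ℝ) (hint : IntegrableOn h S) (c : ℝ) :
    IntegrableOn (fun y => Set.indicator A (fun _ => (1:ℝ)) y * c * h y) S := by
  rw [indicator_mul_eq]
  exact (hint.const_mul c).indicator hA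

lemma comm4 {Nφ Ns Nx : ℕ} (T : Fin Nφ → Fin Ns → Fin Nx → Fin Nx → ℝ) :
    (∑ q : Fin Nφ, ∑ p : Fin Ns, ∑ i : Fin Nx, ∑ j : Fin Nx, T q p i j)
      = ∑ i : Fin Nx, ∑ j : Fin Nx, ∑ q : Fin Nφ, ∑ p : Fin Ns, T q p i j := by
  calc (∑ q : Fin Nφ, ∑ p : Fin Ns, ∑ i : Fin Nx, ∑ j : Fin Nx, T q p i j)
      = ∑ a : Fin Nφ × Fin Ns, ∑ b : Fin Nx × Fin Nx, T a.1 a.2 b.1 b.2 := by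
        simp only [Fintype.sum_prod_type]
    _ = ∑ b : Fin Nx × Fin Nx, ∑ a : Fin Nφ × Fin Ns, T a.1 a.2 b.1 b.2 :=
        Finset.sum_comm
    _ = ∑ i : Fin Nx, ∑ j : Fin Nx, ∑ q : Fin Nφ, ∑ p : Fin Ns, T q p i j := by
        simp only [Fintype.sum_prod_type]

end Aux

/-- For any discretization (spatial grid, strictly increasing angles in
`[0,π)` with their angular pixels, and detector pixels) and any weight function `ω`, the
convolutional Radon transform `R_ω` and convolutional backprojection `R_ω^*` satisfy, for
every `f ∈ L²(Ω)` and `g ∈ L²(S)` (thought of as extended by zero),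
`∫_S (R_ω f) · g = ∫_Ω f · (R_ω^* g)`. -/
theorem stmt7 (Nx Nφ Ns : ℕ) (hNx : 0 < Nx) (hNφ : 0 < Nφ) (hNs : 0 < Ns)
    (ang : Fin Nφ → ℝ) (hmono : StrictMono ang) (hang : ∀ q, ang q ∈ Set.Ico 0 Real.pi)
    (ω : ℝ → ℝ → ℝ)
    (f : ℝ × ℝ → ℝ) (hf : MemLp f 2 volume) (hf0 : ∀ x ∉ Omg, f x = 0)
    (g : ℝ × ℝ → ℝ) (hg : MemLp g 2 volume) (hg0 : ∀ y ∉ Sdom, g y = 0) :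
    ∫ y in Sdom, convRadon Nx Ns ang ω f y * g y
      = ∫ x in Omg, f x * convBack Nx Ns ang ω g x := by
  haveI : Fact (volume Sdom < ⊤) := ⟨volume_Sdom_lt_top⟩
  haveI : Fact (volume Omg < ⊤) := ⟨volume_Omg_lt_top⟩
  have hgint : IntegrableOn g Sdom := (hg.restrict Sdom).integrable (by norm_num)
  have hfint : IntegrableOn f Omg := (hf.restrict Omg).integrable (by norm_num)
  have hA : ∀ (q : Fin Nφ) (p : Fin Ns), MeasurableSet (PhiSet ang q ×ˢ Spix Ns p) :=
    fun q p => (measurableSet_PhiSet ang q).prod measurableSet_Ico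
  have hcr : ∀ y, convRadon Nx Ns ang ω f y * g y
      = ∑ q : Fin Nφ, ∑ p : Fin Ns,
          Set.indicator (PhiSet ang q ×ˢ Spix Ns p) (fun _ => (1:ℝ)) y *
            (∑ i : Fin Nx, ∑ j : Fin Nx,
              ω (ang q) (proj (xc Nx i j) (ang q) - sc Ns (p : ℕ)) *
                ∫ x in Xpix Nx i j, f x) * g y := by
    intro y
    unfold convRadon
    rw [Finset.sum_mul]
    exact Finset.sum_congr rfl fun q _ => by rw [Finset.sum_mul]
  have hcb : ∀ x, f x * convBack Nx Ns ang ω g x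
      = ∑ i : Fin Nx, ∑ j : Fin Nx,
          Set.indicator (Xpix Nx i j) (fun _ => (1:ℝ)) x *
            (∑ q : Fin Nφ, ∑ p : Fin Ns,
              ω (ang q) (proj (xc Nx i j) (ang q) - sc Ns (p : ℕ)) *
                ∫ z in PhiSet ang q ×ˢ Spix Ns p, g z) * f x := by
    intro x
    unfold convBack
    rw [Finset.mul_sum]
    refine Finset.sum_congr rfl fun i _ => ?_
    rw [Finset.mul_sum]
    exact Finset.sum_congr rfl fun j _ => by ring
  have lhs_eq : ∫ y in Sdom, convRadon Nx Ns ang ω f y * g y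
      = ∑ q : Fin Nφ, ∑ p : Fin Ns,
          (∑ i : Fin Nx, ∑ j : Fin Nx,
            ω (ang q) (proj (xc Nx i j) (ang q) - sc Ns (p : ℕ)) *
              ∫ x in Xpix Nx i j, f x) *
            ∫ z in PhiSet ang q ×ˢ Spix Ns p, g z := by
    rw [MeasureTheory.integral_congr_ae (Filter.Eventually.of_forall hcr)]
    rw [MeasureTheory.integral_finset_sum _ (fun q _ =>
      integrable_finset_sum _ (fun p _ => core_integrable Sdom _ (hA q p) g hgint _))]
    refine Finset.sum_congr rfl fun q _ => ?_
    rw [MeasureTheory.integral_finset_sum _ (fun p _ =>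
      core_integrable Sdom _ (hA q p) g hgint _)]
    exact Finset.sum_congr rfl fun p _ =>
      core_integral Sdom _ measurableSet_Sdom (hA q p) g hg0 _
  have rhs_eq : ∫ x in Omg, f x * convBack Nx Ns ang ω g x
      = ∑ i : Fin Nx, ∑ j : Fin Nx,
          (∑ q : Fin Nφ, ∑ p : Fin Ns,
            ω (ang q) (proj (xc Nx i j) (ang q) - sc Ns (p : ℕ)) *
              ∫ z in PhiSet ang q ×ˢ Spix Ns p, g z) *
            ∫ x in Xpix Nx i j, f x := by
    rw [MeasureTheory.integral_congr_ae (Filter.Eventually.of_forall hcb)]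
    rw [MeasureTheory.integral_finset_sum _ (fun i _ =>
      integrable_finset_sum _ (fun j _ =>
        core_integrable Omg _ (measurableSet_Xpix Nx i j) f hfint _))]
    refine Finset.sum_congr rfl fun i _ => ?_
    rw [MeasureTheory.integral_finset_sum _ (fun j _ =>
      core_integrable Omg _ (measurableSet_Xpix Nx i j) f hfint _)]
    exact Finset.sum_congr rfl fun j _ =>
      core_integral Omg _ measurableSet_Omg (measurableSet_Xpix Nx i j) f hf0 _
  rw [lhs_eq, rhs_eq]
  simp only [Finset.sum_mul]
  rw [comm4 (fun q p i j =>
    ω (ang q) (proj (xc Nx i j) (ang q) - sc Ns (p : ℕ)) *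
      (∫ x in Xpix Nx i j, f x) * ∫ z in PhiSet ang q ×ˢ Spix Ns p, g z)]
  exact Finset.sum_congr rfl fun i _ => Finset.sum_congr rfl fun j _ =>
    Finset.sum_congr rfl fun q _ => Finset.sum_congr rfl fun p _ => by ring
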